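/- For any a > 0, the Gaussian tail function satisfies Craig's formula: Q(√a) = (1/π) ∫₀^{π/2} exp(-a/(2 sin²θ)) dθ, where Q(x) = (1/√(2π)) ∫_x^∞ e^{-u²/2} du. -/

import Mathlib

open MeasureTheory Real Set

/-- The Gaussian tail function `Q(x) = (1/√(2π)) ∫_x^∞ e^{-u²/2} du`. -/
noncomputable def gaussQ (x : ℝ) : ℝ :=
  (1 / Real.sqrt (2 * π)) * ∫ u in Set.Ioi x, Real.exp (-u ^ 2 / 2)

namespace CraigAux

noncomputable def g1 (x : ℝ) : ℝ → ℝ := indicator (Ioi x) (fun u => Real.exp (-u ^ 2 / 2))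
noncomputable def g2 : ℝ → ℝ := fun v => Real.exp (-v ^ 2 / 2)

lemma hg2_int : Integrable g2 := by
  have := integrable_exp_neg_mul_sq (b := 1/2) (by norm_num)
  refine this.congr (Filter.Eventually.of_forall fun u => ?_)
  simp [g2]; ring_nf

lemma hg1_int (x : ℝ) : Integrable (g1 x) :=
  (hg2_int.indicator measurableSet_Ioi)

lemma hg2_integral : ∫ v, g2 v = Real.sqrt (2 * π) := by
  have := integral_gaussian (1/2)
  rw [show π / (1/2 : ℝ) = 2 * π by ring] at this
  rw [← this]
  congr 1 with u
  simp [g2]; ring_nf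

lemma aux_exp_tendsto : Filter.Tendsto (fun r : ℝ => Real.exp (-r ^ 2 / 2))
    Filter.atTop (nhds 0) := by
  apply Real.tendsto_exp_atBot.comp
  apply Filter.Tendsto.atBot_div_const (by norm_num : (0:ℝ) < 2)
  exact Filter.tendsto_neg_atTop_atBot.comp
    (Filter.tendsto_pow_atTop (two_ne_zero))

lemma aux_hasDeriv (r : ℝ) : HasDerivAt (fun r : ℝ => -Real.exp (-r ^ 2 / 2))
    (r * Real.exp (-r ^ 2 / 2)) r := by
  have h1 : HasDerivAt (fun r : ℝ => -r ^ 2 / 2) (-r) r := by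
    have := (hasDerivAt_pow 2 r).neg.div_const 2
    simpa using this.congr_deriv (by ring)
  exact (h1.exp).neg.congr_deriv (by ring)

lemma aux_rint (c : ℝ) (hc : 0 ≤ c) :
    ∫ r in Ioi c, r * Real.exp (-r ^ 2 / 2) = Real.exp (-c ^ 2 / 2) := by
  have hcont : ContinuousWithinAt (fun r : ℝ => -Real.exp (-r ^ 2 / 2)) (Ici c) c :=
    (Continuous.continuousWithinAt (by continuity))
  have hpos : ∀ r ∈ Ioi c, 0 ≤ r * Real.exp (-r ^ 2 / 2) := fun r hr =>
    mul_nonneg (le_trans hc hr.le) (Real.exp_pos _).le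
  have := integral_Ioi_of_hasDerivAt_of_nonneg hcont (fun r _ => aux_hasDeriv r)
    hpos (aux_exp_tendsto.neg)
  simpa using this

lemma aux_rint_integrable (c : ℝ) (hc : 0 ≤ c) :
    IntegrableOn (fun r : ℝ => r * Real.exp (-r ^ 2 / 2)) (Ioi c) := by
  have hcont : ContinuousWithinAt (fun r : ℝ => -Real.exp (-r ^ 2 / 2)) (Ici c) c :=
    (Continuous.continuousWithinAt (by continuity))
  have hpos : ∀ r ∈ Ioi c, 0 ≤ r * Real.exp (-r ^ 2 / 2) := fun r hr =>
    mul_nonneg (le_trans hc hr.le) (Real.exp_pos _).le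
  exact integrableOn_Ioi_deriv_of_nonneg hcont (fun r _ => aux_hasDeriv r)
    hpos (aux_exp_tendsto.neg)

lemma exp_prod (r θ : ℝ) :
    Real.exp (-(r * Real.cos θ) ^ 2 / 2) * Real.exp (-(r * Real.sin θ) ^ 2 / 2)
      = Real.exp (-r ^ 2 / 2) := by
  rw [← Real.exp_add]
  congr 1
  have h := Real.sin_sq_add_cos_sq θ
  nlinarith [h]

lemma g_measurable (x : ℝ) :
    Measurable (fun θ : ℝ => Real.exp (-x ^ 2 / (2 * Real.sin θ ^ 2))) := by
  apply Real.measurable_exp.comp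
  exact Measurable.div measurable_const (by fun_prop)

lemma g_intervalIntegrable (x a b : ℝ) :
    IntervalIntegrable (fun θ : ℝ => Real.exp (-x ^ 2 / (2 * Real.sin θ ^ 2))) volume a b := by
  rw [intervalIntegrable_iff]
  apply Measure.integrableOn_of_bounded (M := 1) measure_Ioc_lt_top.ne
    ((g_measurable x).aestronglyMeasurable)
  refine Filter.Eventually.of_forall fun θ => ?_
  rw [Real.norm_eq_abs, abs_of_pos (Real.exp_pos _)]
  rw [← Real.exp_zero]
  apply Real.exp_le_exp.mpr
  exact div_nonpos_iff.mpr (Or.inr ⟨neg_nonpos.mpr (by positivity), by positivity⟩)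

end CraigAux

open CraigAux in
set_option maxHeartbeats 1000000 in
theorem stmt8 (a : ℝ) (ha : 0 < a) :
    gaussQ (Real.sqrt a)
      = (1 / π) * ∫ θ in (0 : ℝ)..(π / 2), Real.exp (-a / (2 * Real.sin θ ^ 2)) := by
  obtain ⟨x, hxdef⟩ : ∃ x, Real.sqrt a = x := ⟨_, rfl⟩
  rw [hxdef]
  have hx : 0 < x := hxdef ▸ Real.sqrt_pos.mpr ha
  have hx2 : x ^ 2 = a := hxdef ▸ Real.sq_sqrt ha.le
  simp_rw [← hx2]
  -- the plane integral of f p = g1 x p.1 * g2 p.2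
  have step1 : ∫ p : ℝ × ℝ, g1 x p.1 * g2 p.2
      = (∫ u in Ioi x, Real.exp (-u ^ 2 / 2)) * Real.sqrt (2 * π) := by
    rw [show (volume : Measure (ℝ × ℝ)) = (volume : Measure ℝ).prod volume from
      (MeasureTheory.Measure.volume_eq_prod ..), integral_prod_mul, hg2_integral]
    congr 1
    rw [g1, integral_indicator measurableSet_Ioi]
  -- polar change of variables
  set F : ℝ × ℝ → ℝ := fun p => p.1 * (g1 x (p.1 * Real.cos p.2) * g2 (p.1 * Real.sin p.2))
    with hF_def
  have hpolar : ∫ p in Ioi (0:ℝ) ×ˢ Ioo (-π) π, F p = ∫ p : ℝ × ℝ, g1 x p.1 * g2 p.2 := by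
    rw [← integral_comp_polarCoord_symm (fun p => g1 x p.1 * g2 p.2)]
    with_unfolding_all rfl
  -- pointwise bound and measurability, for integrability on the polar target
  have hg1_le : ∀ u : ℝ, g1 x u ≤ Real.exp (-u ^ 2 / 2) := fun u =>
    indicator_le_self' (fun _ _ => (Real.exp_pos _).le) u
  have hg1_nonneg : ∀ u : ℝ, 0 ≤ g1 x u := fun u =>
    indicator_nonneg (fun _ _ => (Real.exp_pos _).le) u
  have hFmeas : Measurable F := by
    apply measurable_fst.mul
    apply Measurable.mul
    · have : Measurable (g1 x) :=
        (Measurable.indicator (by fun_prop) measurableSet_Ioi)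
      exact this.comp (by fun_prop)
    · have : Measurable g2 := by unfold g2; fun_prop
      exact this.comp (by fun_prop)
  have hFint : IntegrableOn F (Ioi (0:ℝ) ×ˢ Ioo (-π) π) := by
    have hdom : IntegrableOn (fun p : ℝ × ℝ => p.1 * Real.exp (-p.1 ^ 2 / 2))
        (Ioi (0:ℝ) ×ˢ Ioo (-π) π) := by
      rw [IntegrableOn, Measure.volume_eq_prod, ← Measure.prod_restrict]
      have h2 : Integrable (fun _ : ℝ => (1:ℝ)) ((volume : Measure ℝ).restrict (Ioo (-π) π)) :=
        (integrableOn_const_iff (C := (1:ℝ))).mpr (Or.inr measure_Ioo_lt_top)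
      have := Integrable.mul_prod (aux_rint_integrable 0 le_rfl) h2
      simpa [mul_one] using this
    refine hdom.integrable.mono' hFmeas.aestronglyMeasurable ?_
    refine (ae_restrict_iff' (measurableSet_Ioi.prod measurableSet_Ioo)).mpr
      (Filter.Eventually.of_forall fun p hp => ?_)
    have hr : 0 < p.1 := hp.1
    have h1 : 0 ≤ g1 x (p.1 * Real.cos p.2) * g2 (p.1 * Real.sin p.2) :=
      mul_nonneg (hg1_nonneg _) (Real.exp_pos _).le
    rw [Real.norm_eq_abs, hF_def]
    simp only
    rw [abs_of_nonneg (mul_nonneg hr.le h1)]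
    apply mul_le_mul_of_nonneg_left _ hr.le
    calc g1 x (p.1 * Real.cos p.2) * g2 (p.1 * Real.sin p.2)
        ≤ Real.exp (-(p.1 * Real.cos p.2) ^ 2 / 2) * Real.exp (-(p.1 * Real.sin p.2) ^ 2 / 2) :=
          mul_le_mul_of_nonneg_right (hg1_le _) (Real.exp_pos _).le
      _ = Real.exp (-p.1 ^ 2 / 2) := exp_prod _ _
  -- Fubini: iterate with θ outside
  have step2 : ∫ p in Ioi (0:ℝ) ×ˢ Ioo (-π) π, F p
      = ∫ θ in Ioo (-π) π, ∫ r in Ioi (0:ℝ), F (r, θ) := by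
    rw [show ∫ p in Ioi (0:ℝ) ×ˢ Ioo (-π) π, F p
        = ∫ p in Ioi (0:ℝ) ×ˢ Ioo (-π) π, F p ∂((volume : Measure ℝ).prod volume) from rfl]
    rw [setIntegral_prod F (by rw [IntegrableOn, ← Measure.volume_eq_prod]; exact hFint)]
    apply integral_integral_swap
    rw [Measure.prod_restrict, ← Measure.volume_eq_prod]
    exact hFint
  -- inner integral evaluation
  have inner_eval : ∀ θ ∈ Ioo (-π) π, (∫ r in Ioi (0:ℝ), F (r, θ))
      = indicator (Ioo (-(π/2)) (π/2))
          (fun θ => Real.exp (-x ^ 2 / (2 * Real.cos θ ^ 2))) θ := by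
    intro θ hθ
    by_cases hmem : θ ∈ Ioo (-(π/2)) (π/2)
    · have hcos : 0 < Real.cos θ := Real.cos_pos_of_mem_Ioo hmem
      have hc : 0 < x / Real.cos θ := div_pos hx hcos
      have hFeq : ∀ r : ℝ, F (r, θ)
          = indicator (Ioi (x / Real.cos θ)) (fun r => r * Real.exp (-r ^ 2 / 2)) r := by
        intro r
        rw [hF_def]
        simp only [g1, g2, indicator, mem_Ioi]
        simp only [div_lt_iff₀ hcos]
        by_cases hrc : x < r * Real.cos θ
        · rw [if_pos hrc, if_pos hrc, exp_prod]
        · rw [if_neg hrc, if_neg hrc]; ring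
      simp_rw [hFeq]
      rw [setIntegral_indicator measurableSet_Ioi,
        Set.Ioi_inter_Ioi, max_eq_right hc.le, aux_rint _ hc.le,
        indicator_of_mem hmem]
      congr 1
      rw [div_pow]
      field_simp
    · have hcos : Real.cos θ ≤ 0 := by
        rcases not_and_or.mp (fun h => hmem ⟨h.1, h.2⟩) with h | h
        · push_neg at h
          rw [← Real.cos_neg]
          apply Real.cos_nonpos_of_pi_div_two_le_of_le (by linarith)
          have := hθ.1; linarith [Real.pi_pos]
        · push_neg at h
          apply Real.cos_nonpos_of_pi_div_two_le_of_le h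
          have := hθ.2; linarith [Real.pi_pos]
      rw [indicator_of_notMem hmem]
      rw [setIntegral_congr_fun measurableSet_Ioi (g := fun _ => (0:ℝ)) ?_, integral_zero]
      intro r hr
      have : ¬ (x < r * Real.cos θ) := by
        push_neg
        calc r * Real.cos θ ≤ 0 := mul_nonpos_of_nonneg_of_nonpos (le_of_lt hr) hcos
          _ ≤ x := hx.le
      rw [hF_def]
      simp only [g1, g2, indicator, mem_Ioi]
      rw [if_neg this]; ring
  -- the θ integral
  have step3 : ∫ θ in Ioo (-π) π, ∫ r in Ioi (0:ℝ), F (r, θ)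
      = ∫ θ in Ioo (-(π/2)) (π/2), Real.exp (-x ^ 2 / (2 * Real.cos θ ^ 2)) := by
    rw [setIntegral_congr_fun measurableSet_Ioo inner_eval,
      setIntegral_indicator measurableSet_Ioo]
    congr 1
    rw [Set.inter_eq_self_of_subset_right]
    exact Ioo_subset_Ioo (by linarith [Real.pi_pos]) (by linarith [Real.pi_pos])
  -- substitutions on the θ integral
  have gii := g_intervalIntegrable x
  have step4 : ∫ θ in Ioo (-(π/2)) (π/2), Real.exp (-x ^ 2 / (2 * Real.cos θ ^ 2))
      = 2 * ∫ θ in (0:ℝ)..(π/2), Real.exp (-x ^ 2 / (2 * Real.sin θ ^ 2)) := by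
    have h1 : ∫ θ in Ioo (-(π/2)) (π/2), Real.exp (-x ^ 2 / (2 * Real.cos θ ^ 2))
        = ∫ θ in (-(π/2))..(π/2), Real.exp (-x ^ 2 / (2 * Real.cos θ ^ 2)) := by
      rw [intervalIntegral.integral_of_le (by linarith [Real.pi_pos]),
        integral_Ioc_eq_integral_Ioo]
    have h2 : ∫ θ in (0:ℝ)..π, Real.exp (-x ^ 2 / (2 * Real.sin θ ^ 2))
        = ∫ θ in (-(π/2))..(π/2), Real.exp (-x ^ 2 / (2 * Real.cos θ ^ 2)) := by
      have := intervalIntegral.integral_comp_sub_left (a := (0:ℝ)) (b := π)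
        (fun θ => Real.exp (-x ^ 2 / (2 * Real.cos θ ^ 2))) (π/2)
      rw [show π/2 - π = -(π/2) by ring, show π/2 - 0 = π/2 by ring] at this
      simp only [Real.cos_pi_div_two_sub] at this
      exact this
    have h3 : ∫ θ in (0:ℝ)..π, Real.exp (-x ^ 2 / (2 * Real.sin θ ^ 2))
        = (∫ θ in (0:ℝ)..(π/2), Real.exp (-x ^ 2 / (2 * Real.sin θ ^ 2)))
          + ∫ θ in (π/2)..π, Real.exp (-x ^ 2 / (2 * Real.sin θ ^ 2)) :=
      (intervalIntegral.integral_add_adjacent_intervals (gii 0 (π/2)) (gii (π/2) π)).symm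
    have h4 : ∫ θ in (π/2)..π, Real.exp (-x ^ 2 / (2 * Real.sin θ ^ 2))
        = ∫ θ in (0:ℝ)..(π/2), Real.exp (-x ^ 2 / (2 * Real.sin θ ^ 2)) := by
      have := intervalIntegral.integral_comp_sub_left (a := (0:ℝ)) (b := π/2)
        (fun θ => Real.exp (-x ^ 2 / (2 * Real.sin θ ^ 2))) π
      rw [show π - π/2 = π/2 by ring, show π - 0 = π by ring] at this
      simp only [Real.sin_pi_sub] at this
      exact this.symm
    rw [h1, ← h2, h3, h4]; ring
  -- assemble
  have key : (∫ u in Ioi x, Real.exp (-u ^ 2 / 2)) * Real.sqrt (2 * π)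
      = 2 * ∫ θ in (0:ℝ)..(π/2), Real.exp (-x ^ 2 / (2 * Real.sin θ ^ 2)) := by
    rw [← step1, ← hpolar, step2, step3, step4]
  have hsq : Real.sqrt (2 * π) * Real.sqrt (2 * π) = 2 * π :=
    Real.mul_self_sqrt (by positivity)
  have hsqrt_ne : Real.sqrt (2 * π) ≠ 0 := by positivity
  have hpi : (π : ℝ) ≠ 0 := Real.pi_ne_zero
  rw [gaussQ]
  rw [div_mul_eq_mul_div, one_mul, div_mul_eq_mul_div, one_mul,
    div_eq_div_iff hsqrt_ne hpi]
  have key2 : (∫ u in Ioi x, Real.exp (-u ^ 2 / 2)) * Real.sqrt (2 * π) * Real.sqrt (2 * π)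
      = 2 * (∫ θ in (0:ℝ)..(π/2), Real.exp (-x ^ 2 / (2 * Real.sin θ ^ 2)))
        * Real.sqrt (2 * π) := by
    rw [key]
  rw [mul_assoc, hsq] at key2
  ring_nf at key2 ⊢
  linarith [key2]
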